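/- Let (V, r, par) be a finite rooted tree, ℓ : V → ℝ with ℓ r = 0 and ℓ u ≥ 0 for all u, and w : V → ℝ with w u ≥ 0 for all u. Let O be the inclusion-maximal covered service subtree (with respect to w). Then O minimizes cost over service subtrees: for every service subtree X, ℓ(O) + ∑_{u∉O} w u ≤ ℓ(X) + ∑_{u∉X} w u. -/
import Mathlib


open scoped Classical

/-- `u` is a descendant of `v` (equivalently, `v` is an ancestor of `u`). -/
def IsDesc {V : Type*} (par : V → V) (u v : V) : Prop := ∃ n : ℕ, par^[n] u = v

/-- `Z` is a subtree rooted at `v`. -/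
def IsSubtree {V : Type*} [DecidableEq V] (par : V → V) (v : V) (Z : Finset V) : Prop :=
  v ∈ Z ∧ (∀ u ∈ Z, IsDesc par u v) ∧ ∀ u ∈ Z, u ≠ v → par u ∈ Z

/-- `Z` is a covered subtree rooted at `z` (with respect to the waiting costs `w`). -/
def Covered {V : Type*} [Fintype V] [DecidableEq V] (par : V → V) (ℓ w : V → ℝ)
    (z : V) (Z : Finset V) : Prop :=
  IsSubtree par z Z ∧ ∀ x ∈ Z, x ≠ z →
    ∑ u ∈ Z.filter (fun u => IsDesc par u x), ℓ u ≤
      ∑ u ∈ Z.filter (fun u => IsDesc par u x), w u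

section Aux

variable {V : Type*} [Fintype V] [DecidableEq V] {par : V → V}

lemma isDesc_refl (u : V) : IsDesc par u u := ⟨0, rfl⟩

lemma isDesc_par {u x : V} (h : IsDesc par u x) (hu : u ≠ x) : IsDesc par (par u) x := by
  obtain ⟨n, hn⟩ := h
  match n, hn with
  | 0, hn => exact absurd hn hu
  | n + 1, hn => exact ⟨n, by rw [← Function.iterate_succ_apply]; exact hn⟩

lemma isDesc_trans {u v x : V} (h1 : IsDesc par u v) (h2 : IsDesc par v x) :
    IsDesc par u x := by
  obtain ⟨m, hm⟩ := h1
  obtain ⟨n, hn⟩ := h2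
  exact ⟨n + m, by rw [Function.iterate_add_apply, hm, hn]⟩

/-- In a service subtree, every ancestor of a member is a member. -/
lemma mem_anc {r : V} (hroot : par r = r) {Z : Finset V} (hZ : IsSubtree par r Z)
    {u v : V} (hu : u ∈ Z) (h : IsDesc par u v) : v ∈ Z := by
  obtain ⟨n, hn⟩ := h
  induction n generalizing u with
  | zero => exact hn ▸ hu
  | succ n ih =>
    by_cases hur : u = r
    · subst hur
      rw [Function.iterate_fixed hroot] at hn
      exact hn ▸ hu
    · exact ih (hZ.2.2 u hu hur) (by rw [← Function.iterate_succ_apply]; exact hn)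

/-- Key lemma 1: for any service subtree `X`, `ℓ(O \ X) ≤ w(O \ X)`, since `O \ X`
decomposes into covered pieces of `O`. -/
lemma key1 {r : V} (hroot : par r = r) (hreach : ∀ v, ∃ n : ℕ, par^[n] v = r)
    (ℓ w : V → ℝ) {O : Finset V} (hO : Covered par ℓ w r O) :
    ∀ n (X : Finset V), IsSubtree par r X → (O \ X).card ≤ n →
      ∑ u ∈ O \ X, ℓ u ≤ ∑ u ∈ O \ X, w u := by
  intro n
  induction n with
  | zero =>
    intro X _ hc
    have h0 : O \ X = ∅ := Finset.card_eq_zero.mp (Nat.le_zero.mp hc)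
    simp [h0]
  | succ n ih =>
    intro X hX hc
    by_cases hne : O \ X = ∅
    · simp [hne]
    · obtain ⟨u, hu⟩ := Finset.nonempty_iff_ne_empty.mpr hne
      rw [Finset.mem_sdiff] at hu
      have hm : ∃ m : ℕ, par^[m] u ∈ X := by
        obtain ⟨k, hk⟩ := hreach u
        exact ⟨k, by rw [hk]; exact hX.1⟩
      set m := Nat.find hm with hmdef
      have hm0 : m ≠ 0 := by
        intro h
        have := Nat.find_spec hm
        rw [← hmdef, h] at this
        exact hu.2 this
      set x := par^[m - 1] u with hxdef
      have hxX : x ∉ X := Nat.find_min hm (by omega)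
      have hpx : par x ∈ X := by
        have hx1 : par^[m - 1 + 1] u = par^[m] u := by congr 1; omega
        have : par x = par^[m] u := by
          rw [hxdef, ← hx1, Function.iterate_succ_apply']
        rw [this]
        exact Nat.find_spec hm
      have hxO : x ∈ O := mem_anc hroot hO.1 hu.1 ⟨m - 1, rfl⟩
      have hxr : x ≠ r := fun h => hxX (h ▸ hX.1)
      set D := O.filter (fun v => IsDesc par v x) with hDdef
      have cov : ∑ v ∈ D, ℓ v ≤ ∑ v ∈ D, w v := hO.2 x hxO hxr
      have hDsub : D ⊆ O \ X := by
        intro v hv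
        rw [hDdef, Finset.mem_filter] at hv
        rw [Finset.mem_sdiff]
        refine ⟨hv.1, fun hvX => hxX (mem_anc hroot hX hvX hv.2)⟩
      have hxD : x ∈ D := by
        rw [hDdef, Finset.mem_filter]
        exact ⟨hxO, isDesc_refl x⟩
      have hX' : IsSubtree par r (X ∪ D) := by
        refine ⟨Finset.mem_union_left _ hX.1, fun v _ => hreach v, ?_⟩
        intro v hv hvr
        rw [Finset.mem_union] at hv
        rcases hv with hv | hv
        · exact Finset.mem_union_left _ (hX.2.2 v hv hvr)
        · rw [hDdef, Finset.mem_filter] at hv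
          by_cases hvx : v = x
          · exact Finset.mem_union_left _ (hvx ▸ hpx)
          · refine Finset.mem_union_right _ ?_
            rw [hDdef, Finset.mem_filter]
            exact ⟨hO.1.2.2 v hv.1 hvr, isDesc_par hv.2 hvx⟩
      have hsd : O \ (X ∪ D) = (O \ X) \ D := by
        ext a
        simp only [Finset.mem_sdiff, Finset.mem_union]
        tauto
      have hcard : (O \ (X ∪ D)).card ≤ n := by
        rw [hsd]
        have hss : (O \ X) \ D ⊂ O \ X := by
          refine Finset.ssubset_iff_of_subset (Finset.sdiff_subset) |>.mpr ?_
          exact ⟨x, hDsub hxD, by simp [hxD]⟩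
        have := Finset.card_lt_card hss
        omega
      have hrec := ih (X ∪ D) hX' hcard
      rw [hsd] at hrec
      calc ∑ u ∈ O \ X, ℓ u = ∑ u ∈ (O \ X) \ D, ℓ u + ∑ u ∈ D, ℓ u :=
            (Finset.sum_sdiff hDsub).symm
        _ ≤ ∑ u ∈ (O \ X) \ D, w u + ∑ u ∈ D, w u := add_le_add hrec cov
        _ = ∑ u ∈ O \ X, w u := Finset.sum_sdiff hDsub

/-- Key lemma 2: for any service subtree `Y ⊇ O`, `w(Y \ O) ≤ ℓ(Y \ O)`,
by maximality of `O`. -/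
lemma key2 {r : V} (hroot : par r = r) (hreach : ∀ v, ∃ n : ℕ, par^[n] v = r)
    (ℓ w : V → ℝ) {O : Finset V} (hO : Covered par ℓ w r O)
    (hOmax : ∀ Z, Covered par ℓ w r Z → Z ⊆ O) :
    ∀ n (Y : Finset V), IsSubtree par r Y → O ⊆ Y → (Y \ O).card ≤ n →
      ∑ u ∈ Y \ O, w u ≤ ∑ u ∈ Y \ O, ℓ u := by
  intro n
  induction n with
  | zero =>
    intro Y _ _ hc
    have h0 : Y \ O = ∅ := Finset.card_eq_zero.mp (Nat.le_zero.mp hc)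
    simp [h0]
  | succ n ih =>
    intro Y hY hOY hc
    by_cases hne : Y \ O = ∅
    · simp [hne]
    · have hncov : ¬ Covered par ℓ w r Y := by
        intro hcov
        exact hne (Finset.sdiff_eq_empty_iff_subset.mpr (hOmax Y hcov))
      have hnc : ¬ (∀ x ∈ Y, x ≠ r →
          ∑ u ∈ Y.filter (fun u => IsDesc par u x), ℓ u ≤
            ∑ u ∈ Y.filter (fun u => IsDesc par u x), w u) :=
        fun h => hncov ⟨hY, h⟩
      push_neg at hnc
      obtain ⟨x, hxY, hxr, hlt⟩ := hnc
      set DY := Y.filter (fun u => IsDesc par u x) with hDYdef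
      have hF : O.filter (fun u => IsDesc par u x) = DY ∩ O := by
        ext a
        simp only [hDYdef, Finset.mem_filter, Finset.mem_inter]
        have := @hOY a
        tauto
      have hOD : ∑ u ∈ DY ∩ O, ℓ u ≤ ∑ u ∈ DY ∩ O, w u := by
        rw [← hF]
        by_cases hxO : x ∈ O
        · exact hO.2 x hxO hxr
        · have : O.filter (fun u => IsDesc par u x) = ∅ := by
            rw [Finset.filter_eq_empty_iff]
            intro v hv hd
            exact hxO (mem_anc hroot hO.1 hv hd)
          simp [this]
      set E := DY \ O with hEdef
      have hsplit : ∀ f : V → ℝ, ∑ u ∈ DY, f u = ∑ u ∈ E, f u + ∑ u ∈ DY ∩ O, f u := by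
        intro f
        rw [hEdef]
        have h1 : DY \ O = DY \ (DY ∩ O) := by
          ext a; simp only [Finset.mem_sdiff, Finset.mem_inter]; tauto
        rw [h1, Finset.sum_sdiff (Finset.inter_subset_left)]
      have hE : ∑ u ∈ E, w u < ∑ u ∈ E, ℓ u := by
        have h1 := hsplit ℓ
        have h2 := hsplit w
        linarith
      have hEne : E.Nonempty := by
        rcases Finset.eq_empty_or_nonempty E with h | h
        · rw [h] at hE; simp at hE
        · exact h
      have hEYO : E ⊆ Y \ O := by
        intro v hv
        rw [hEdef, Finset.mem_sdiff, hDYdef, Finset.mem_filter] at hv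
        rw [Finset.mem_sdiff]
        exact ⟨hv.1.1, hv.2⟩
      have hY' : IsSubtree par r (Y \ E) := by
        refine ⟨?_, fun v _ => hreach v, ?_⟩
        · rw [Finset.mem_sdiff]
          exact ⟨hY.1, fun h => (Finset.mem_sdiff.mp (hEYO h)).2 hO.1.1⟩
        · intro v hv hvr
          rw [Finset.mem_sdiff] at hv
          rw [Finset.mem_sdiff]
          refine ⟨hY.2.2 v hv.1 hvr, ?_⟩
          intro hpE
          have hpE' := hpE
          rw [hEdef, Finset.mem_sdiff, hDYdef, Finset.mem_filter] at hpE'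
          have hvd : IsDesc par v x := isDesc_trans ⟨1, rfl⟩ hpE'.1.2
          have hvO : v ∉ O := fun hvO => hpE'.2 (hO.1.2.2 v hvO hvr)
          exact hv.2 (by rw [hEdef, Finset.mem_sdiff, hDYdef, Finset.mem_filter]
                         exact ⟨⟨hv.1, hvd⟩, hvO⟩)
      have hOY' : O ⊆ Y \ E := by
        intro v hv
        rw [Finset.mem_sdiff]
        exact ⟨hOY hv, fun h => (Finset.mem_sdiff.mp (hEYO h)).2 hv⟩
      have hsd : (Y \ E) \ O = (Y \ O) \ E := by
        ext a; simp only [Finset.mem_sdiff]; tauto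
      have hcard : ((Y \ E) \ O).card ≤ n := by
        rw [hsd]
        have hss : (Y \ O) \ E ⊂ Y \ O := by
          refine Finset.ssubset_iff_of_subset (Finset.sdiff_subset) |>.mpr ?_
          obtain ⟨e, he⟩ := hEne
          exact ⟨e, hEYO he, by simp [he]⟩
        have := Finset.card_lt_card hss
        omega
      have hrec := ih (Y \ E) hY' hOY' hcard
      rw [hsd] at hrec
      calc ∑ u ∈ Y \ O, w u = ∑ u ∈ (Y \ O) \ E, w u + ∑ u ∈ E, w u :=
            (Finset.sum_sdiff hEYO).symm
        _ ≤ ∑ u ∈ (Y \ O) \ E, ℓ u + ∑ u ∈ E, ℓ u := by linarith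
        _ = ∑ u ∈ Y \ O, ℓ u := Finset.sum_sdiff hEYO

end Aux

/-- The inclusion-maximal covered service subtree `O` minimizes
`cost(X) = ℓ(X) + ∑_{u∉X} w u` over all service subtrees `X`. -/
theorem stmt7 {V : Type*} [Fintype V] [DecidableEq V]
    (r : V) (par : V → V) (hroot : par r = r) (hreach : ∀ v, ∃ n : ℕ, par^[n] v = r)
    (ℓ : V → ℝ) (hℓr : ℓ r = 0) (hℓ : ∀ u, 0 ≤ ℓ u)
    (w : V → ℝ) (hw : ∀ u, 0 ≤ w u)
    (O : Finset V) (hO : Covered par ℓ w r O)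
    (hOmax : ∀ Z, Covered par ℓ w r Z → Z ⊆ O) :
    ∀ X : Finset V, IsSubtree par r X →
      ∑ u ∈ O, ℓ u + ∑ u ∈ Oᶜ, w u ≤ ∑ u ∈ X, ℓ u + ∑ u ∈ Xᶜ, w u := by
  intro X hX
  set Y := X ∪ O with hYdef
  have hYsub : IsSubtree par r Y := by
    refine ⟨Finset.mem_union_left _ hX.1, fun v _ => hreach v, ?_⟩
    intro v hv hvr
    rw [hYdef, Finset.mem_union] at hv ⊢
    rcases hv with hv | hv
    · exact Or.inl (hX.2.2 v hv hvr)
    · exact Or.inr (hO.1.2.2 v hv hvr)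
  have hOY : O ⊆ Y := Finset.subset_union_right
  have hXY : X ⊆ Y := Finset.subset_union_left
  have hYX : Y \ X = O \ X := by
    ext a
    simp only [hYdef, Finset.mem_sdiff, Finset.mem_union]
    tauto
  have h1 := key2 hroot hreach ℓ w hO hOmax (Y \ O).card Y hYsub hOY le_rfl
  have h2 := key1 hroot hreach ℓ w hO (O \ X).card X hX le_rfl
  -- complement decompositions
  have compl_decomp : ∀ (Z : Finset V) (_ : Z ⊆ Y),
      ∑ u ∈ Zᶜ, w u = ∑ u ∈ Yᶜ, w u + ∑ u ∈ Y \ Z, w u := by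
    intro Z hZY
    have hsub : Y \ Z ⊆ Zᶜ := by
      intro a ha
      rw [Finset.mem_sdiff] at ha
      rw [Finset.mem_compl]
      exact ha.2
    have hceq : Zᶜ \ (Y \ Z) = Yᶜ := by
      ext a
      simp only [Finset.mem_sdiff, Finset.mem_compl]
      have := @hZY a
      tauto
    rw [← Finset.sum_sdiff hsub, hceq]
  have sum_decomp : ∀ (Z : Finset V) (_ : Z ⊆ Y),
      ∑ u ∈ Y, ℓ u = ∑ u ∈ Z, ℓ u + ∑ u ∈ Y \ Z, ℓ u := by
    intro Z hZY
    rw [← Finset.sum_sdiff hZY]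
    ring
  have e1 := compl_decomp O hOY
  have e2 := compl_decomp X hXY
  have e3 := sum_decomp O hOY
  have e4 := sum_decomp X hXY
  rw [hYX] at e2 e4
  linarith
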